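/- Let S ⊆ ℕ^n (viewed inside ℝ^n) be a finite downward-closed set: if s ∈ S, t ∈ ℕ^n, and t ≤ s entrywise, then t ∈ S. Let x ∈ convexHull ℝ S and let Λ ∈ ℝ^n satisfy 0 < Λ_i < x_i for every coordinate i. Then Λ lies in the interior of convexHull ℝ S. -/
import Mathlib


/-- For a finite downward-closed set `S ⊆ ℕⁿ`, entrywise strict dominance
`0 < Λ < x` with `x` in the convex hull puts `Λ` in the interior of the hull. -/
theorem stmt_13 (n : ℕ) (S : Set (Fin n → ℝ)) (hS : S.Finite)
    (hnat : ∀ s ∈ S, ∀ i, ∃ m : ℕ, s i = (m : ℝ))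
    (hdown : ∀ s ∈ S, ∀ t : Fin n → ℕ, (∀ i, (t i : ℝ) ≤ s i) →
      (fun i => ((t i : ℕ) : ℝ)) ∈ S)
    (x : Fin n → ℝ) (hx : x ∈ convexHull ℝ S)
    (Λ : Fin n → ℝ) (hΛ : ∀ i, 0 < Λ i ∧ Λ i < x i) :
    Λ ∈ interior (convexHull ℝ S) := by
  -- Step 1: for each s ∈ S the box [0, s] is contained in the hull.
  have hbox : ∀ s ∈ S, Set.Icc (0 : Fin n → ℝ) s ⊆ convexHull ℝ S := by
    intro s hs
    have hs0 : ∀ i, (0 : ℝ) ≤ s i := by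
      intro i
      obtain ⟨m, hm⟩ := hnat s hs i
      rw [hm]; positivity
    have h1 : Set.Icc (0 : Fin n → ℝ) s
        = Set.pi Set.univ (fun i => convexHull ℝ ({0, s i} : Set ℝ)) := by
      rw [← Set.pi_univ_Icc]
      refine Set.pi_congr rfl fun i _ => ?_
      rw [convexHull_pair, segment_eq_Icc (hs0 i)]
      rfl
    rw [h1, ← convexHull_pi]
    refine convexHull_mono ?_
    intro v hv
    -- v has coordinates in {0, s i}; express it as a natural vector below s.
    choose m hm using hnat s hs
    have key : ∀ i, ∃ k : ℕ, v i = (k : ℝ) ∧ (k : ℝ) ≤ s i := by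
      intro i
      rcases hv i (Set.mem_univ i) with h | h
      · exact ⟨0, by simpa using h, by simpa using hs0 i⟩
      · exact ⟨m i, by rw [h, hm i], by rw [hm i]⟩
    choose k hk hk' using key
    have := hdown s hs k hk'
    have hveq : (fun i => ((k i : ℕ) : ℝ)) = v := by
      funext i; exact (hk i).symm
    rwa [hveq] at this
  -- Step 2: the box [0, x] is contained in the hull.
  have hxpos : ∀ i, 0 < x i := fun i => (hΛ i).1.trans (hΛ i).2
  have hbox2 : ∀ y : Fin n → ℝ, (∀ i, 0 ≤ y i) → (∀ i, y i ≤ x i) →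
      y ∈ convexHull ℝ S := by
    intro y hy0 hyx
    set t : Fin n → ℝ := fun i => y i / x i with ht
    have hyeq : y = fun i => t i * x i := by
      funext i
      rw [ht]
      exact (div_mul_cancel₀ (y i) (hxpos i).ne').symm
    -- the linear map scaling coordinate i by t i
    set f : (Fin n → ℝ) →ₗ[ℝ] (Fin n → ℝ) :=
      LinearMap.pi (fun i => (t i) • LinearMap.proj i) with hf
    have hfx : f x = y := by
      funext i
      simp [hf, LinearMap.pi_apply, hyeq]
    have hfS : f '' S ⊆ convexHull ℝ S := by
      rintro _ ⟨s, hs, rfl⟩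
      refine hbox s hs ⟨?_, ?_⟩
      · intro i
        simp only [hf, LinearMap.pi_apply, LinearMap.smul_apply, LinearMap.proj_apply,
          smul_eq_mul, Pi.zero_apply]
        have : 0 ≤ t i := div_nonneg (hy0 i) (hxpos i).le
        have hs0 : (0 : ℝ) ≤ s i := by
          obtain ⟨m, hm⟩ := hnat s hs i
          rw [hm]; positivity
        exact mul_nonneg this hs0
      · intro i
        simp only [hf, LinearMap.pi_apply, LinearMap.smul_apply, LinearMap.proj_apply,
          smul_eq_mul]
        have ht1 : t i ≤ 1 := by
          rw [ht]
          exact div_le_one_of_le₀ (hyx i) (hxpos i).le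
        have hs0 : (0 : ℝ) ≤ s i := by
          obtain ⟨m, hm⟩ := hnat s hs i
          rw [hm]; positivity
        calc t i * s i ≤ 1 * s i := by
              apply mul_le_mul_of_nonneg_right ht1 hs0
          _ = s i := one_mul _
    have : f x ∈ f '' (convexHull ℝ S) := Set.mem_image_of_mem f hx
    rw [f.image_convexHull] at this
    have hsub : convexHull ℝ (f '' S) ⊆ convexHull ℝ S :=
      convexHull_min hfS (convex_convexHull ℝ S)
    rw [hfx] at this
    exact hsub this
  -- Step 3: the open box (0, x) is an open neighbourhood of Λ inside the hull.
  have hopen : IsOpen (Set.pi Set.univ (fun i => Set.Ioo (0 : ℝ) (x i))) :=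
    isOpen_set_pi Set.finite_univ (fun i _ => isOpen_Ioo)
  have hmem : Λ ∈ Set.pi Set.univ (fun i => Set.Ioo (0 : ℝ) (x i)) := by
    intro i _
    exact ⟨(hΛ i).1, (hΛ i).2⟩
  have hsub : Set.pi Set.univ (fun i => Set.Ioo (0 : ℝ) (x i)) ⊆ convexHull ℝ S := by
    intro y hy
    exact hbox2 y (fun i => (hy i (Set.mem_univ i)).1.le)
      (fun i => (hy i (Set.mem_univ i)).2.le)
  exact interior_maximal hsub hopen hmem
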